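/- arXiv:2504.21003 — 2 statements merged into one kernel-verified Lean document; each statement's English description precedes it below -/
import Mathlib

section
/- For every positive integer k and real x, the product of cos(x/2^n) for n = 1 to k equals 2^{1-k} times the sum over n = 1 to 2^{k-1} of cos(((n - 1/2)/2^{k-1}) x). -/
lemma aux (j : ℕ) (x : ℝ) :
    ∏ n ∈ Finset.range (j+1), Real.cos (x / (2:ℝ) ^ (n+1)) =
      (1 / (2:ℝ) ^ j) *
        ∑ n ∈ Finset.range (2 ^ j),
          Real.cos (((n : ℝ) + 1/2) / (2:ℝ) ^ j * x) := by
  induction j generalizing x with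
  | zero =>
    norm_num
    ring_nf
  | succ j ih =>
    rw [Finset.prod_range_succ']
    have h1 : ∀ n : ℕ, x / (2:ℝ) ^ (n+1+1) = (x/2) / (2:ℝ) ^ (n+1) := by
      intro n; rw [pow_succ]; ring
    simp only [h1]
    rw [ih (x/2)]
    have h2 : (2:ℕ) ^ (j+1) = 2 ^ j + 2 ^ j := by ring
    rw [h2, Finset.sum_range_add,
      ← Finset.sum_range_reflect (fun m => Real.cos (((m : ℝ) + 1/2) / (2:ℝ) ^ (j+1) * x)) (2^j)]
    rw [← Finset.sum_add_distrib, Finset.mul_sum, Finset.mul_sum, Finset.sum_mul]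
    apply Finset.sum_congr rfl
    intro n hn
    have hn' : (n:ℝ) + 1 ≤ 2^j := by
      have := Finset.mem_range.mp hn
      exact_mod_cast this
    have hc : ((2^j - 1 - n : ℕ) : ℝ) = 2^j - 1 - n := by
      have h : n + 1 ≤ 2^j := Finset.mem_range.mp hn
      push_cast [Nat.sub_sub, Nat.cast_sub (by omega : 1 + n ≤ 2^j)]
      ring
    simp only [hc]
    have hA : ((n:ℝ) + 1/2) / (2:ℝ)^j * (x/2) = ((n:ℝ) + 1/2) / (2:ℝ)^(j+1) * x := by
      rw [pow_succ]; ring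
    rw [hA]
    set B := ((n:ℝ) + 1/2) / (2:ℝ)^(j+1) * x with hB
    have hhalf : x / 2 = (2:ℝ)^j / (2:ℝ)^(j+1) * x := by rw [pow_succ]; field_simp
    have e1 : ((2:ℝ)^j - 1 - n + 1/2) / (2:ℝ)^(j+1) * x = x/2 - B := by
      rw [hhalf, hB]; ring
    have e2 : (((2^j + n : ℕ):ℝ) + 1/2) / (2:ℝ)^(j+1) * x = x/2 + B := by
      push_cast; rw [hhalf, hB]; ring
    rw [e1, e2, Real.cos_add, Real.cos_sub]
    rw [show x / (2:ℝ)^(0+1) = x/2 by norm_num, pow_succ]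
    ring

theorem prod_cos_eq_sum_cos (k : ℕ) (hk : 0 < k) (x : ℝ) :
    ∏ n ∈ Finset.Icc 1 k, Real.cos (x / (2 : ℝ) ^ n) =
      (1 / (2 : ℝ) ^ (k - 1)) *
        ∑ n ∈ Finset.Icc (1 : ℕ) (2 ^ (k - 1)),
          Real.cos (((n : ℝ) - 1 / 2) / (2 : ℝ) ^ (k - 1) * x) := by
  obtain ⟨j, rfl⟩ : ∃ j, k = j + 1 := ⟨k - 1, (Nat.succ_pred_eq_of_pos hk).symm⟩
  simp only [Nat.add_sub_cancel]
  rw [← Finset.Ico_add_one_right_eq_Icc, Finset.prod_Ico_eq_prod_range,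
    ← Finset.Ico_add_one_right_eq_Icc, Finset.sum_Ico_eq_sum_range]
  simp only [Nat.succ_sub_one, Nat.add_sub_cancel]
  simp only [show ∀ n, 1 + n = n + 1 from fun n => Nat.add_comm 1 n]
  rw [aux j x]
  congr 1
  apply Finset.sum_congr rfl
  intro n _
  congr 1
  push_cast
  ring
end

section
/- For y > 0, the imaginary Voigt function L(x,y) = (1/π) ∫_{−∞}^{∞} e^{−t²}(x − t)/(y² + (x − t)²) dt equals (1/√π) ∫₀^∞ e^{−t²/4 − y t} sin(x t) dt. -/
open MeasureTheory Real Complex Set Filter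

lemma lapl_sin (y : ℝ) (hy : 0 < y) (a : ℝ) :
    ∫ s in Set.Ioi (0:ℝ), Real.exp (-y * s) * Real.sin (a * s) = a / (y ^ 2 + a ^ 2) := by
  set c : ℂ := -y + a * Complex.I with hc
  have hcne : c ≠ 0 := by
    intro h
    have : (-y : ℝ) = 0 := by
      have := congrArg Complex.re h
      simpa [hc] using this
    linarith
  have hnorm : ∀ s : ℝ, ‖Complex.exp (c * s)‖ = Real.exp (-y * s) := by
    intro s
    rw [Complex.norm_exp]
    congr 1
    simp [hc, add_mul]
  have hint : IntegrableOn (fun s : ℝ => Complex.exp (c * s)) (Set.Ioi 0) := by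
    refine (exp_neg_integrableOn_Ioi 0 hy).mono' ?_ ?_
    · exact (Complex.continuous_exp.comp (by continuity)).aestronglyMeasurable
    · filter_upwards with s using le_of_eq (hnorm s)
  have hderiv : ∀ s : ℝ, HasDerivAt (fun s : ℝ => Complex.exp (c * s) / c)
      (Complex.exp (c * s)) s := by
    intro s
    have h1 : HasDerivAt (fun s : ℝ => c * (s : ℂ)) c s := by
      simpa using ((hasDerivAt_id s).ofReal_comp.const_mul c)
    have := (h1.cexp).div_const c
    simpa [mul_comm, mul_div_assoc, mul_div_cancel_left₀ _ hcne] using this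
  have htend : Tendsto (fun s : ℝ => Complex.exp (c * s) / c) atTop (nhds 0) := by
    rw [tendsto_zero_iff_norm_tendsto_zero]
    simp only [norm_div, hnorm]
    have h1 : Tendsto (fun s : ℝ => Real.exp (-y * s)) atTop (nhds 0) := by
      apply Real.tendsto_exp_atBot.comp
      exact (tendsto_const_mul_atBot_of_neg (neg_neg_iff_pos.mpr hy)).mpr tendsto_id
    simpa using h1.div_const ‖c‖
  have key : ∫ s in Set.Ioi (0:ℝ), Complex.exp (c * s) = 0 - Complex.exp (c * 0) / c := by
    exact integral_Ioi_of_hasDerivAt_of_tendsto' (fun s _ => hderiv s) hint htend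
  have him : ∀ s : ℝ, (Complex.exp (c * s)).im = Real.exp (-y * s) * Real.sin (a * s) := by
    intro s
    rw [Complex.exp_im]
    congr 1 <;> [skip; congr 1] <;> simp [hc, add_mul]
  calc ∫ s in Set.Ioi (0:ℝ), Real.exp (-y * s) * Real.sin (a * s)
      = ∫ s in Set.Ioi (0:ℝ), (Complex.exp (c * s)).im := by
        exact setIntegral_congr_fun measurableSet_Ioi fun s _ => (him s).symm
    _ = (∫ s in Set.Ioi (0:ℝ), Complex.exp (c * s)).im := by
        simpa using integral_im hint
    _ = (0 - Complex.exp (c * 0) / c).im := by rw [key]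
    _ = a / (y ^ 2 + a ^ 2) := by
        simp only [mul_zero, Complex.exp_zero, zero_sub, Complex.neg_im]
        rw [Complex.div_im]
        simp [hc, Complex.normSq_apply]
        ring


lemma gauss_sin (x s : ℝ) :
    ∫ t : ℝ, Real.exp (-t ^ 2) * Real.sin ((x - t) * s) =
      Real.sqrt Real.pi * Real.exp (-s ^ 2 / 4) * Real.sin (x * s) := by
  have hb : (-1 : ℂ).re < 0 := by norm_num
  have hint := integrable_cexp_quadratic' hb (-s * Complex.I) (x * s * Complex.I)
  have key := integral_cexp_quadratic hb (-s * Complex.I) (x * s * Complex.I)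
  have him : ∀ t : ℝ, (Complex.exp ((-1) * t ^ 2 + (-s * Complex.I) * t + x * s * Complex.I)).im
      = Real.exp (-t ^ 2) * Real.sin ((x - t) * s) := by
    intro t
    rw [Complex.exp_im]
    have h1 : ((-1:ℂ) * t ^ 2 + (-s * Complex.I) * t + (x:ℂ) * s * Complex.I).re = -t^2 := by
      simp [sq]
    have h2 : ((-1:ℂ) * t ^ 2 + (-s * Complex.I) * t + (x:ℂ) * s * Complex.I).im = (x - t)*s := by
      simp [sq]; ring
    rw [h1, h2]
  have hsqrt : ((Real.pi : ℂ) / -(-1)) ^ (1 / 2 : ℂ) = (Real.sqrt Real.pi : ℂ) := by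
    rw [neg_neg, div_one, show (1/2:ℂ) = ((1/2:ℝ):ℂ) by norm_num,
      ← Complex.ofReal_cpow Real.pi_pos.le, Real.sqrt_eq_rpow]
  calc ∫ t : ℝ, Real.exp (-t ^ 2) * Real.sin ((x - t) * s)
      = ∫ t : ℝ, (Complex.exp ((-1) * t ^ 2 + (-s * Complex.I) * t + x * s * Complex.I)).im :=
        by exact integral_congr_ae (Filter.Eventually.of_forall fun t => (him t).symm)
    _ = (∫ t : ℝ, Complex.exp ((-1) * t ^ 2 + (-s * Complex.I) * t + x * s * Complex.I)).im := by
        simpa using integral_im hint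
    _ = Real.sqrt Real.pi * Real.exp (-s ^ 2 / 4) * Real.sin (x * s) := by
        rw [key, hsqrt]
        have : (x * s * Complex.I - (-s * Complex.I) ^ 2 / (4 * -1) : ℂ)
            = Complex.mk (-s ^ 2 / 4) (x * s) := by
          rw [Complex.mk_eq_add_mul_I]
          push_cast
          ring_nf
          rw [Complex.I_sq]
          ring
        rw [this]
        rw [Complex.mul_im]
        simp [Complex.exp_im, Complex.exp_re]
        ring

theorem voigt_L_laplace (x y : ℝ) (hy : 0 < y) :
    (1 / Real.pi) * ∫ t : ℝ, Real.exp (-t ^ 2) * (x - t) / (y ^ 2 + (x - t) ^ 2) =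
      (1 / Real.sqrt Real.pi) *
        ∫ t in Set.Ioi (0 : ℝ), Real.exp (-t ^ 2 / 4 - y * t) * Real.sin (x * t) := by
  have hprod : Integrable (Function.uncurry fun t s =>
      Real.exp (-t ^ 2) * (Real.exp (-y * s) * Real.sin ((x - t) * s)))
      (volume.prod (volume.restrict (Set.Ioi (0:ℝ)))) := by
    have hdom : Integrable (fun p : ℝ × ℝ => Real.exp (-p.1 ^ 2) * Real.exp (-y * p.2))
        (volume.prod (volume.restrict (Set.Ioi (0:ℝ)))) :=
      Integrable.mul_prod (by simpa using integrable_exp_neg_mul_sq (by norm_num : (0:ℝ) < 1))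
        (exp_neg_integrableOn_Ioi 0 hy)
    refine hdom.mono' ?_ ?_
    · exact Continuous.aestronglyMeasurable (by fun_prop)
    · filter_upwards with p
      rw [Function.uncurry]
      calc ‖Real.exp (-p.1 ^ 2) * (Real.exp (-y * p.2) * Real.sin ((x - p.1) * p.2))‖
          = Real.exp (-p.1 ^ 2) * Real.exp (-y * p.2) * |Real.sin ((x - p.1) * p.2)| := by
            simp [abs_mul, abs_of_pos (Real.exp_pos _), mul_assoc]
        _ ≤ Real.exp (-p.1 ^ 2) * Real.exp (-y * p.2) * 1 := by
            gcongr; exact Real.abs_sin_le_one _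
        _ = Real.exp (-p.1 ^ 2) * Real.exp (-y * p.2) := by ring
  have step1 : ∫ t : ℝ, Real.exp (-t ^ 2) * (x - t) / (y ^ 2 + (x - t) ^ 2)
      = ∫ t : ℝ, ∫ s in Set.Ioi (0:ℝ),
          Real.exp (-t ^ 2) * (Real.exp (-y * s) * Real.sin ((x - t) * s)) := by
    congr 1
    ext t
    rw [mul_div_assoc, ← lapl_sin y hy (x - t), ← integral_const_mul]
  have step2 := integral_integral_swap hprod
  have step3 : ∀ s : ℝ,
      (∫ t : ℝ, Real.exp (-t ^ 2) * (Real.exp (-y * s) * Real.sin ((x - t) * s)))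
      = Real.sqrt Real.pi * (Real.exp (-s ^ 2 / 4 - y * s) * Real.sin (x * s)) := by
    intro s
    have h0 : ∀ t : ℝ, Real.exp (-t ^ 2) * (Real.exp (-y * s) * Real.sin ((x - t) * s))
        = Real.exp (-y * s) * (Real.exp (-t ^ 2) * Real.sin ((x - t) * s)) := fun t => by ring
    simp_rw [h0]
    rw [integral_const_mul, gauss_sin x s,
      show -s^2/4 - y*s = -y*s + -s^2/4 by ring, Real.exp_add]
    ring
  have step4 : (∫ s in Set.Ioi (0:ℝ), ∫ t : ℝ,
      Real.exp (-t ^ 2) * (Real.exp (-y * s) * Real.sin ((x - t) * s)))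
      = Real.sqrt Real.pi *
        ∫ s in Set.Ioi (0:ℝ), Real.exp (-s ^ 2 / 4 - y * s) * Real.sin (x * s) := by
    rw [← integral_const_mul]
    exact setIntegral_congr_fun measurableSet_Ioi fun s _ => step3 s
  rw [step1, step2, step4, ← mul_assoc]
  congr 1
  have hspos : 0 < Real.sqrt Real.pi := Real.sqrt_pos.mpr Real.pi_pos
  rw [div_mul_eq_mul_div, one_mul, div_eq_div_iff Real.pi_pos.ne' hspos.ne']
  simpa using Real.mul_self_sqrt Real.pi_pos.le
end
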